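/- If Γ is an LCD code with generator matrix G, then Π = G^T (G G^T)^{-1} G is the orthogonal projector from F^n onto Γ: for all v ∈ F^n, vΠ ∈ Γ, vΠ = v iff v ∈ Γ, and v - vΠ ∈ Γ^⊥. -/

import Mathlib

/-- The dual code of a linear code `Γ ⊆ F^n` with respect to the standard bilinear form. -/
def dualCode {F : Type*} [Field F] {n : ℕ} (Γ : Submodule F (Fin n → F)) :
    Submodule F (Fin n → F) where
  carrier := {v | ∀ u ∈ Γ, dotProduct u v = 0}
  zero_mem' := fun u _ => dotProduct_zero u
  add_mem' := by
    intro a b ha hb u hu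
    rw [dotProduct_add, ha u hu, hb u hu, add_zero]
  smul_mem' := by
    intro c v hv u hu
    rw [dotProduct_smul, hv u hu, smul_zero]

open Matrix
/-- If `Γ` is an LCD code with generator matrix `G`, then
`P = Gᵀ (G Gᵀ)⁻¹ G` is the orthogonal projector from `F^n` onto `Γ`: `vP ∈ Γ`,
`vP = v` iff `v ∈ Γ`, and `v - vP ∈ Γ^⊥`. -/
theorem stmt7 (F : Type*) [Field F] [Fintype F] (n k : ℕ)
    (G : Matrix (Fin k) (Fin n) F)
    (hG : LinearIndependent F (fun i => G i))
    (hLCD : IsUnit (G * G.transpose).det)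
    (Γ : Submodule F (Fin n → F))
    (hΓ : Γ = Submodule.span F (Set.range fun i => G i))
    (P : Matrix (Fin n) (Fin n) F)
    (hP : P = G.transpose * (G * G.transpose)⁻¹ * G) :
    ∀ v : Fin n → F,
      Matrix.vecMul v P ∈ Γ ∧
      (Matrix.vecMul v P = v ↔ v ∈ Γ) ∧
      v - Matrix.vecMul v P ∈ dualCode Γ := by
  intro v
  subst hΓ hP
  rw [show (Set.range fun i => G i) = Set.range G.row from rfl, ← range_vecMulLinear]
  have hmem : ∀ w : Fin n → F,
      w ᵥ* (G.transpose * (G * G.transpose)⁻¹ * G) ∈ LinearMap.range G.vecMulLinear := by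
    intro w
    exact ⟨w ᵥ* (G.transpose * (G * G.transpose)⁻¹), by
      simp [Matrix.vecMulLinear_apply, Matrix.vecMul_vecMul]⟩
  have hfix : ∀ c : Fin k → F,
      (c ᵥ* G) ᵥ* (G.transpose * (G * G.transpose)⁻¹ * G) = c ᵥ* G := by
    intro c
    rw [Matrix.vecMul_vecMul]
    congr 1
    simp only [← Matrix.mul_assoc]
    rw [Matrix.mul_nonsing_inv _ hLCD, Matrix.one_mul]
  refine ⟨hmem v, ⟨fun h => h ▸ hmem v, ?_⟩, ?_⟩
  · rintro ⟨c, rfl⟩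
    exact hfix c
  · intro u hu
    obtain ⟨c, rfl⟩ := hu
    have key : (c ᵥ* G) ⬝ᵥ (v ᵥ* (G.transpose * (G * G.transpose)⁻¹ * G))
        = (c ᵥ* G) ⬝ᵥ v := by
      rw [← Matrix.mulVec_transpose G c,
        ← Matrix.mulVec_transpose (G.transpose * (G * G.transpose)⁻¹ * G) v,
        Matrix.dotProduct_mulVec, Matrix.vecMul_transpose, Matrix.mulVec_mulVec]
      congr 1
      simp only [Matrix.mul_assoc]
      rw [Matrix.nonsing_inv_mul _ hLCD, Matrix.mul_one]
    simp only [Matrix.vecMulLinear_apply, dotProduct_sub, key, sub_self]
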